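/- Let a(t) = log(1 + e^t) and ρ₁ > 0 be such that for all t, h ∈ ℝ: a(t + h) ≥ a(t) + h·a'(t) + (1/2)·a''(t)·h²/(ρ₁|h| + 1). In particular, this holds with ρ₁ = 1, where a'(t) = e^t/(1+e^t) and a''(t) = e^t/(1+e^t)². -/

import Mathlib

open Real Set

/-- Step 2: `e^{-x} + x - 1 ≥ x²/(2(x+1))` for `x ≥ 0`. -/
lemma phi_ge (x : ℝ) (hx : 0 ≤ x) :
    x ^ 2 / (2 * (x + 1)) ≤ Real.exp (-x) + x - 1 := by
  set f : ℝ → ℝ := fun y => Real.exp (-y) + y - 1 - y ^ 2 / (2 * (y + 1)) with hf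
  have key : ∀ y : ℝ, 0 ≤ y → HasDerivAt f
      (-Real.exp (-y) + 1 - (2 * y * (2 * (y + 1)) - y ^ 2 * 2) / (2 * (y + 1)) ^ 2) y := by
    intro y hy
    have hden : (2 : ℝ) * (y + 1) ≠ 0 := by positivity
    have h1 : HasDerivAt (fun y : ℝ => Real.exp (-y)) (-Real.exp (-y)) y := by
      simpa [Function.comp_def] using (Real.hasDerivAt_exp (-y)).comp y ((hasDerivAt_id y).neg)
    have h2 : HasDerivAt (fun y : ℝ => y ^ 2 / (2 * (y + 1)))
        ((2 * y * (2 * (y + 1)) - y ^ 2 * 2) / (2 * (y + 1)) ^ 2) y := by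
      have hnum : HasDerivAt (fun y : ℝ => y ^ 2) (2 * y) y := by
        simpa using hasDerivAt_pow 2 y
      have hden' : HasDerivAt (fun y : ℝ => 2 * (y + 1)) 2 y := by
        simpa using ((hasDerivAt_id y).add_const 1).const_mul (2 : ℝ)
      exact hnum.div hden' hden
    exact (((h1.add (hasDerivAt_id y)).sub_const 1).sub h2)
  have mono : MonotoneOn f (Ici (0 : ℝ)) := by
    apply monotoneOn_of_deriv_nonneg (convex_Ici 0)
    · exact fun y hy => ((key y hy).continuousAt).continuousWithinAt
    · intro y hy
      rw [interior_Ici] at hy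
      exact ((key y (le_of_lt hy)).differentiableAt).differentiableWithinAt
    · intro y hy
      rw [interior_Ici] at hy
      rw [(key y (le_of_lt hy)).deriv]
      have hy' : (0 : ℝ) < y := hy
      have hexp : Real.exp (-y) ≤ (y ^ 2 + 2 * y + 2) / (2 * (y + 1) ^ 2) := by
        have hq : y / 2 + 1 ≤ Real.exp (y / 2) := Real.add_one_le_exp (y / 2)
        have hsq : Real.exp y = Real.exp (y / 2) * Real.exp (y / 2) := by
          rw [← Real.exp_add]; ring_nf
        have h01 : (0 : ℝ) ≤ y / 2 + 1 := by linarith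
        have hE : (y / 2 + 1) * (y / 2 + 1) ≤ Real.exp y := by
          rw [hsq]; exact mul_le_mul hq hq h01 (Real.exp_pos _).le
        have hE2 : (y / 2 + 1) * (y / 2 + 1) * (y ^ 2 + 2 * y + 2)
            ≤ Real.exp y * (y ^ 2 + 2 * y + 2) :=
          mul_le_mul_of_nonneg_right hE (by positivity)
        rw [Real.exp_neg, inv_eq_one_div, div_le_div_iff₀ (Real.exp_pos y) (by positivity)]
        nlinarith [hE2, mul_nonneg (mul_nonneg hy'.le hy'.le) hy'.le,
          mul_nonneg (mul_nonneg (mul_nonneg hy'.le hy'.le) hy'.le) hy'.le]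
      have hpos : (0 : ℝ) < (y + 1) ^ 2 := by positivity
      have : (2 * y * (2 * (y + 1)) - y ^ 2 * 2) / (2 * (y + 1)) ^ 2
          = (y ^ 2 + 2 * y) / (2 * (y + 1) ^ 2) := by
        field_simp; ring
      rw [this]
      have h2 : (y ^ 2 + 2 * y) / (2 * (y + 1) ^ 2) + (y ^ 2 + 2 * y + 2) / (2 * (y + 1) ^ 2) = 1 := by
        field_simp; ring
      linarith [hexp]
  have h0 : f 0 = 0 := by simp [hf]
  have := mono (self_mem_Ici) hx hx
  rw [h0] at this
  simp only [hf] at this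
  linarith

/-- Derivative of `y ↦ log (1 - p + p e^y)`. -/
lemma hasDerivAt_logpart (p y : ℝ) (hp0 : 0 < p) (hp1 : p < 1) :
    HasDerivAt (fun y : ℝ => Real.log (1 - p + p * Real.exp y))
      (p * Real.exp y / (1 - p + p * Real.exp y)) y := by
  have hD : (0 : ℝ) < 1 - p + p * Real.exp y := by
    have := Real.exp_pos y; nlinarith
  have h1 : HasDerivAt (fun y : ℝ => 1 - p + p * Real.exp y) (p * Real.exp y) y := by
    simpa using ((Real.hasDerivAt_exp y).const_mul p).const_add (1 - p)
  exact h1.log (ne_of_gt hD)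

/-- Step 1: self-concordance-type bound for the logistic log-partition. -/
lemma core (p : ℝ) (hp0 : 0 < p) (hp1 : p < 1) (h : ℝ) :
    p * h + p * (1 - p) * (Real.exp (-|h|) + |h| - 1) ≤
      Real.log (1 - p + p * Real.exp h) := by
  have hD : ∀ y : ℝ, (0 : ℝ) < 1 - p + p * Real.exp y := by
    intro y; have := Real.exp_pos y; nlinarith
  rcases le_or_gt 0 h with hh | hh
  · -- h ≥ 0, |h| = h
    rw [abs_of_nonneg hh]
    set g : ℝ → ℝ := fun y =>
      Real.log (1 - p + p * Real.exp y) - (p * y + p * (1 - p) * (Real.exp (-y) + y - 1))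
      with hg
    have key : ∀ y : ℝ, HasDerivAt g
        (p * Real.exp y / (1 - p + p * Real.exp y)
          - (p + p * (1 - p) * (-Real.exp (-y) + 1))) y := by
      intro y
      have h2 : HasDerivAt (fun y : ℝ => Real.exp (-y)) (-Real.exp (-y)) y := by
        simpa [Function.comp_def] using (Real.hasDerivAt_exp (-y)).comp y ((hasDerivAt_id y).neg)
      have h3 : HasDerivAt (fun y : ℝ => p * y + p * (1 - p) * (Real.exp (-y) + y - 1))
          (p + p * (1 - p) * (-Real.exp (-y) + 1)) y := by
        have := (((h2.add (hasDerivAt_id y)).sub_const 1).const_mul (p * (1 - p))).const_add 0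
        exact (((hasDerivAt_id y).const_mul p).add
          (((h2.add (hasDerivAt_id y)).sub_const 1).const_mul (p * (1 - p)))).congr_deriv (by ring)
      exact (hasDerivAt_logpart p y hp0 hp1).sub h3
    have mono : MonotoneOn g (Ici (0 : ℝ)) := by
      apply monotoneOn_of_deriv_nonneg (convex_Ici 0)
      · exact fun y _ => (key y).continuousAt.continuousWithinAt
      · exact fun y _ => (key y).differentiableAt.differentiableWithinAt
      · intro y hy
        rw [(key y).deriv]
        have hs : (0 : ℝ) < Real.exp y := Real.exp_pos y
        have hDy := hD y
        have heq : p * Real.exp y / (1 - p + p * Real.exp y)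
              - (p + p * (1 - p) * (-Real.exp (-y) + 1))
            = p * (1 - p) ^ 2 * (Real.exp y - 1) ^ 2
              / (Real.exp y * (1 - p + p * Real.exp y)) := by
          rw [Real.exp_neg]
          field_simp
          ring
        rw [heq]
        exact div_nonneg (mul_nonneg (mul_nonneg hp0.le (sq_nonneg _)) (sq_nonneg _))
          (mul_pos hs hDy).le
    have h0 : g 0 = 0 := by simp [hg]
    have := mono self_mem_Ici hh hh
    rw [h0] at this
    simp only [hg] at this
    linarith
  · -- h < 0, |h| = -h
    rw [abs_of_neg hh, neg_neg]
    set g : ℝ → ℝ := fun y =>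
      Real.log (1 - p + p * Real.exp y) - (p * y + p * (1 - p) * (Real.exp y - y - 1))
      with hg
    have key : ∀ y : ℝ, HasDerivAt g
        (p * Real.exp y / (1 - p + p * Real.exp y)
          - (p + p * (1 - p) * (Real.exp y - 1))) y := by
      intro y
      have h3 : HasDerivAt (fun y : ℝ => p * y + p * (1 - p) * (Real.exp y - y - 1))
          (p + p * (1 - p) * (Real.exp y - 1)) y := by
        exact (((hasDerivAt_id y).const_mul p).add
          ((((Real.hasDerivAt_exp y).sub (hasDerivAt_id y)).sub_const 1).const_mul (p * (1 - p)))).congr_deriv (by ring)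
      exact (hasDerivAt_logpart p y hp0 hp1).sub h3
    have anti : AntitoneOn g (Iic (0 : ℝ)) := by
      apply antitoneOn_of_deriv_nonpos (convex_Iic 0)
      · exact fun y _ => (key y).continuousAt.continuousWithinAt
      · exact fun y _ => (key y).differentiableAt.differentiableWithinAt
      · intro y hy
        rw [(key y).deriv]
        have hDy := hD y
        have heq : p * Real.exp y / (1 - p + p * Real.exp y)
              - (p + p * (1 - p) * (Real.exp y - 1))
            = -(p ^ 2 * (1 - p) * (Real.exp y - 1) ^ 2 / (1 - p + p * Real.exp y)) := by
          field_simp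
          ring
        rw [heq]
        have h1p : (0 : ℝ) ≤ 1 - p := by linarith
        have : (0 : ℝ) ≤ p ^ 2 * (1 - p) * (Real.exp y - 1) ^ 2 / (1 - p + p * Real.exp y) :=
          div_nonneg (mul_nonneg (mul_nonneg (sq_nonneg p) h1p) (sq_nonneg _)) hDy.le
        linarith
    have h0 : g 0 = 0 := by simp [hg]
    have := anti hh.le self_mem_Iic hh.le
    rw [h0] at this
    simp only [hg] at this
    linarith

theorem stmt15 (t h : ℝ) :
    Real.log (1 + Real.exp (t + h)) ≥
      Real.log (1 + Real.exp t) + h * (Real.exp t / (1 + Real.exp t)) +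
        (1/2) * (Real.exp t / (1 + Real.exp t)^2) * h^2 / (1 * |h| + 1) := by
  set p : ℝ := Real.exp t / (1 + Real.exp t) with hp
  have het : (0 : ℝ) < 1 + Real.exp t := by positivity
  have hp0 : 0 < p := by positivity
  have hp1 : p < 1 := by
    rw [hp, div_lt_one het]; linarith
  have hDrw : 1 - p + p * Real.exp h = (1 + Real.exp (t + h)) / (1 + Real.exp t) := by
    rw [hp, Real.exp_add]; field_simp; ring
  have hlog : Real.log (1 - p + p * Real.exp h)
      = Real.log (1 + Real.exp (t + h)) - Real.log (1 + Real.exp t) := by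
    rw [hDrw, Real.log_div (by positivity) (ne_of_gt het)]
  have hpq : p * (1 - p) = Real.exp t / (1 + Real.exp t) ^ 2 := by
    rw [hp]; field_simp; ring
  have hcore := core p hp0 hp1 h
  rw [hlog] at hcore
  have hphi := phi_ge |h| (abs_nonneg h)
  have hstep : (1/2) * (Real.exp t / (1 + Real.exp t)^2) * h^2 / (1 * |h| + 1)
      ≤ p * (1 - p) * (Real.exp (-|h|) + |h| - 1) := by
    rw [hpq] at *
    have h2 : (1/2) * (Real.exp t / (1 + Real.exp t)^2) * h^2 / (1 * |h| + 1)
        = (Real.exp t / (1 + Real.exp t) ^ 2) * (|h| ^ 2 / (2 * (|h| + 1))) := by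
      have hne : (|h| : ℝ) + 1 ≠ 0 := by positivity
      have hne2 : (1 + Real.exp t) ≠ 0 := ne_of_gt het
      rw [one_mul, sq_abs]
      field_simp
    rw [h2]
    exact mul_le_mul_of_nonneg_left hphi (by positivity)
  linarith
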